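/- Under the standing assumptions on φ and φ_λ: for every sequence λ_k → 0⁺ and every sequence x_k converging strongly to x in H, limsup_{k→∞} φ_{λ_k}(x_k) ≤ φ(x). (Theorem 3.1(b), strong convergence case.) -/

import Mathlib

open Filter Topology MeasureTheory

/-- The Moreau envelope of a function `S : H × E → ℝ` (in two arguments) with parameter
`lam`, for the Hilbert norm of the product. -/
noncomputable def moreauEnv2 {H E : Type*} [NormedAddCommGroup H] [InnerProductSpace ℝ H]
    [NormedAddCommGroup E] [InnerProductSpace ℝ E]
    (S : H → E → ℝ) (lam : ℝ) (x : H) (z : E) : ℝ :=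
  ⨅ u : H × E, (S u.1 u.2 + (‖x - u.1‖ ^ 2 + ‖z - u.2‖ ^ 2) / (2 * lam))

/-- Weak (sequential) convergence in a Hilbert space: `⟪x_k, y⟫ → ⟪x₀, y⟫` for every `y`. -/
def WeakSeqTendsto {H : Type*} [NormedAddCommGroup H] [InnerProductSpace ℝ H]
    (x : ℕ → H) (x₀ : H) : Prop :=
  ∀ y : H, Tendsto (fun k => (inner ℝ (x k) y : ℝ)) atTop (𝓝 (inner ℝ x₀ y))

/-- A convex function which is lower semicontinuous at a point admits a linear minorant. -/
private lemma aux_minorant {W : Type*} [NormedAddCommGroup W] [NormedSpace ℝ W]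
    {f : W → ℝ} (hconv : ConvexOn ℝ Set.univ f) (c₀ : W)
    (hlsc : LowerSemicontinuousAt f c₀) :
    ∃ A B : ℝ, 0 ≤ B ∧ ∀ u, A - B * ‖u - c₀‖ ≤ f u := by
  have h1 := hlsc (f c₀ - 1) (by linarith)
  rw [Metric.eventually_nhds_iff] at h1
  obtain ⟨r, hr, hball⟩ := h1
  refine ⟨f c₀ - 1, 2 / r, by positivity, fun u => ?_⟩
  by_cases hu : ‖u - c₀‖ < r
  · have h2 := hball (y := u) (by rwa [dist_eq_norm])
    have h3 : 0 ≤ 2 / r * ‖u - c₀‖ := by positivity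
    linarith
  · push_neg at hu
    set d := ‖u - c₀‖ with hd
    have hd0 : 0 < d := lt_of_lt_of_le hr hu
    set t := r / (2 * d) with ht
    have ht0 : 0 < t := by positivity
    have ht1 : t ≤ 1 / 2 := by
      rw [ht, div_le_div_iff₀ (by positivity) (by norm_num)]; nlinarith
    have hcv := hconv.2 (Set.mem_univ c₀) (Set.mem_univ u)
      (show (0:ℝ) ≤ 1 - t by linarith) ht0.le (by ring)
    have hq : f (c₀ + t • (u - c₀)) ≤ (1 - t) * f c₀ + t * f u := by
      have he : (1 - t) • c₀ + t • u = c₀ + t • (u - c₀) := by module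
      rw [he] at hcv
      simpa [smul_eq_mul] using hcv
    have htd2 : t * d = r / 2 := by
      rw [ht]; field_simp
    have hqb : f c₀ - 1 < f (c₀ + t • (u - c₀)) := by
      apply hball
      rw [dist_eq_norm]
      have he : c₀ + t • (u - c₀) - c₀ = t • (u - c₀) := by abel
      rw [he, norm_smul, Real.norm_eq_abs, abs_of_pos ht0, ← hd, htd2]
      linarith
    have htd : t * (2 / r * d) = 1 := by
      rw [ht]; field_simp
    nlinarith [hq, hqb, ht0.le]

/-- The sup norm on a product is dominated by the `ℓ²` combination. -/
private lemma aux_sq_le {H E : Type*} [NormedAddCommGroup H] [NormedAddCommGroup E]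
    (p : H × E) : ‖p‖ ^ 2 ≤ ‖p.1‖ ^ 2 + ‖p.2‖ ^ 2 := by
  rw [Prod.norm_def]
  rcases le_total ‖p.1‖ ‖p.2‖ with hc | hc
  · rw [max_eq_right hc]; nlinarith [norm_nonneg p.1]
  · rw [max_eq_left hc]; nlinarith [norm_nonneg p.2]

/-- The family defining the Moreau envelope is bounded below whenever the function has a
linear minorant. -/
private lemma aux_bdd {H E : Type*} [NormedAddCommGroup H] [NormedSpace ℝ H]
    [NormedAddCommGroup E] [NormedSpace ℝ E]
    {F : H × E → ℝ} {A B : ℝ} {c₀ : H × E} (hB : 0 ≤ B)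
    (hmin : ∀ u, A - B * ‖u - c₀‖ ≤ F u)
    (w : H × E) {l : ℝ} (hl : 0 < l) :
    BddBelow (Set.range fun u : H × E =>
      F u + (‖w.1 - u.1‖ ^ 2 + ‖w.2 - u.2‖ ^ 2) / (2 * l)) := by
  refine ⟨A - B * ‖w - c₀‖ - B ^ 2 * l / 2, ?_⟩
  rintro _ ⟨u, rfl⟩
  have h1 := hmin u
  set s : ℝ := ‖w - u‖ with hs
  have hs0 : 0 ≤ s := norm_nonneg _
  have hsq : s ^ 2 ≤ ‖w.1 - u.1‖ ^ 2 + ‖w.2 - u.2‖ ^ 2 := by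
    have := aux_sq_le (w - u)
    simpa [hs] using this
  have htri : ‖u - c₀‖ ≤ s + ‖w - c₀‖ := by
    calc ‖u - c₀‖ ≤ ‖u - w‖ + ‖w - c₀‖ := norm_sub_le_norm_sub_add_norm_sub u w c₀
    _ = s + ‖w - c₀‖ := by rw [norm_sub_rev u w]
  have hmul : B * ‖u - c₀‖ ≤ B * (s + ‖w - c₀‖) := mul_le_mul_of_nonneg_left htri hB
  have hdiv : s ^ 2 / (2 * l) ≤ (‖w.1 - u.1‖ ^ 2 + ‖w.2 - u.2‖ ^ 2) / (2 * l) := by gcongr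
  have key : B * s - B ^ 2 * l / 2 ≤ s ^ 2 / (2 * l) := by
    rw [← sub_nonneg]
    have he : s ^ 2 / (2 * l) - (B * s - B ^ 2 * l / 2) = (s - B * l) ^ 2 / (2 * l) := by
      field_simp; ring
    rw [he]; positivity
  simp only []
  linarith

private lemma aux_quad {t l B c₁ : ℝ} (ht : 0 ≤ t) (hl : 0 < l)
    (h : t ^ 2 < 2 * l * c₁ + 2 * l * (B * t)) :
    t ^ 2 ≤ 4 * l * c₁ + 4 * l ^ 2 * B ^ 2 := by
  nlinarith [sq_nonneg (t - 2 * l * B)]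

/-- The key pointwise fact: if the Moreau envelopes at `(x k, z)` with parameters `lam k → 0⁺`
are frequently below `c k → cs`, then `F (x₀, z) ≤ cs`. -/
private lemma aux_pointwise {H E : Type*} [NormedAddCommGroup H] [NormedSpace ℝ H]
    [NormedAddCommGroup E] [NormedSpace ℝ E]
    {F : H × E → ℝ} (hFlsc : LowerSemicontinuous F)
    {A B : ℝ} {c₀ : H × E} (hB : 0 ≤ B) (hmin : ∀ u, A - B * ‖u - c₀‖ ≤ F u)
    (lam : ℕ → ℝ) (hpos : ∀ k, 0 < lam k) (hlam0 : Tendsto lam atTop (𝓝 0))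
    (x : ℕ → H) (x₀ : H) (hx : Tendsto x atTop (𝓝 x₀)) (z : E)
    (c : ℕ → ℝ) (cs : ℝ) (hc : Tendsto c atTop (𝓝 cs))
    (hfreq : ∃ᶠ k in atTop,
      (⨅ u : H × E, (F u + (‖x k - u.1‖ ^ 2 + ‖z - u.2‖ ^ 2) / (2 * lam k))) ≤ c k) :
    F (x₀, z) ≤ cs := by
  by_contra hcon
  push_neg at hcon
  set w₀ : H × E := (x₀, z) with hw₀
  set ε : ℝ := (F w₀ - cs) / 2 with hε
  have hε0 : 0 < ε := by
    rw [hε]; simp only [hw₀]; linarith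
  have h1 := hFlsc w₀ (cs + ε) (by simp only [hε]; linarith)
  rw [Metric.eventually_nhds_iff] at h1
  obtain ⟨r, hr, hball⟩ := h1
  set c₁ : ℝ := max (cs + ε - A + B * (1 + ‖w₀ - c₀‖)) 0 with hc₁
  have hc₁0 : 0 ≤ c₁ := le_max_right _ _
  have hδ : Tendsto (fun k => Real.sqrt (4 * lam k * c₁ + 4 * lam k ^ 2 * B ^ 2))
      atTop (𝓝 0) := by
    have hpoly : Tendsto (fun k => 4 * lam k * c₁ + 4 * lam k ^ 2 * B ^ 2) atTop (𝓝 0) := by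
      have hcont : Continuous fun t : ℝ => 4 * t * c₁ + 4 * t ^ 2 * B ^ 2 := by continuity
      have := (hcont.tendsto 0).comp hlam0
      simpa [Function.comp_def] using this
    have := (Real.continuous_sqrt.tendsto 0).comp hpoly
    simpa [Function.comp_def] using this
  have hev1 : ∀ᶠ k in atTop, c k + lam k < cs + ε := by
    have ht : Tendsto (fun k => c k + lam k) atTop (𝓝 (cs + 0)) := hc.add hlam0
    rw [add_zero] at ht
    exact ht.eventually (eventually_lt_nhds (by linarith))
  have hev2 : ∀ᶠ k in atTop, ‖x k - x₀‖ < min 1 (r / 2) := by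
    have ht : Tendsto (fun k => ‖x k - x₀‖) atTop (𝓝 0) := by
      have := hx.sub_const x₀
      rw [sub_self] at this
      exact this.norm.congr' (by simp) |>.mono_right (by simp [norm_zero])
    exact ht.eventually (eventually_lt_nhds (by positivity))
  have hev3 : ∀ᶠ k in atTop, Real.sqrt (4 * lam k * c₁ + 4 * lam k ^ 2 * B ^ 2) < r / 2 :=
    hδ.eventually (eventually_lt_nhds (by positivity))
  obtain ⟨k, hk, hk1, hk2, hk3⟩ := (hfreq.and_eventually (hev1.and (hev2.and hev3))).exists
  have hlk := hpos k
  have hlt : (⨅ u : H × E, (F u + (‖x k - u.1‖ ^ 2 + ‖z - u.2‖ ^ 2) / (2 * lam k)))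
      < c k + lam k := lt_of_le_of_lt hk (by linarith)
  obtain ⟨u, hu⟩ := exists_lt_of_ciInf_lt hlt
  set wk : H × E := (x k, z) with hwk
  set t : ℝ := ‖wk - u‖ with htdef
  have ht0 : 0 ≤ t := norm_nonneg _
  have htsq : t ^ 2 ≤ ‖x k - u.1‖ ^ 2 + ‖z - u.2‖ ^ 2 := by
    have := aux_sq_le (wk - u)
    simpa [htdef] using this
  have hD0 : 0 ≤ ‖x k - u.1‖ ^ 2 + ‖z - u.2‖ ^ 2 := by positivity
  have hwkw₀ : ‖wk - w₀‖ = ‖x k - x₀‖ := by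
    have h1 : (wk - w₀ : H × E) = (x k - x₀, (0 : E)) := by
      simp [hwk, hw₀, Prod.ext_iff]
    rw [h1, Prod.norm_def]
    simp [max_eq_left (norm_nonneg _)]
  have hxk1 : ‖x k - x₀‖ < 1 := (lt_min_iff.1 hk2).1
  have hxkr : ‖x k - x₀‖ < r / 2 := (lt_min_iff.1 hk2).2
  have hFu : A - B * (t + 1 + ‖w₀ - c₀‖) ≤ F u := by
    refine le_trans ?_ (hmin u)
    have htri : ‖u - c₀‖ ≤ t + ‖x k - x₀‖ + ‖w₀ - c₀‖ := by
      calc ‖u - c₀‖ ≤ ‖u - w₀‖ + ‖w₀ - c₀‖ := norm_sub_le_norm_sub_add_norm_sub _ _ _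
      _ ≤ (‖u - wk‖ + ‖wk - w₀‖) + ‖w₀ - c₀‖ := by
          have := norm_sub_le_norm_sub_add_norm_sub u wk w₀
          linarith
      _ = t + ‖x k - x₀‖ + ‖w₀ - c₀‖ := by rw [norm_sub_rev u wk, ← htdef, hwkw₀]
    have : B * ‖u - c₀‖ ≤ B * (t + 1 + ‖w₀ - c₀‖) := by
      apply mul_le_mul_of_nonneg_left _ hB
      linarith
    linarith
  have hchain : F u + t ^ 2 / (2 * lam k) < cs + ε := by
    have hd : t ^ 2 / (2 * lam k) ≤ (‖x k - u.1‖ ^ 2 + ‖z - u.2‖ ^ 2) / (2 * lam k) := by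
      gcongr
    linarith
  have hq1 : t ^ 2 / (2 * lam k) < c₁ + B * t := by
    have h2 : cs + ε - A + B * (1 + ‖w₀ - c₀‖) ≤ c₁ := le_max_left _ _
    linarith
  have hq2 : t ^ 2 < 2 * lam k * c₁ + 2 * lam k * (B * t) := by
    rw [div_lt_iff₀ (by positivity)] at hq1
    calc t ^ 2 < (c₁ + B * t) * (2 * lam k) := hq1
    _ = 2 * lam k * c₁ + 2 * lam k * (B * t) := by ring
  have hq3 : t ^ 2 ≤ 4 * lam k * c₁ + 4 * lam k ^ 2 * B ^ 2 :=
    aux_quad ht0 hlk hq2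
  have htr : t < r / 2 := by
    have : t ≤ Real.sqrt (4 * lam k * c₁ + 4 * lam k ^ 2 * B ^ 2) := by
      rw [show t = Real.sqrt (t ^ 2) by rw [Real.sqrt_sq ht0]]
      exact Real.sqrt_le_sqrt hq3
    linarith
  have hub : dist u w₀ < r := by
    rw [dist_eq_norm]
    calc ‖u - w₀‖ ≤ ‖u - wk‖ + ‖wk - w₀‖ := norm_sub_le_norm_sub_add_norm_sub _ _ _
    _ = t + ‖x k - x₀‖ := by rw [norm_sub_rev u wk, ← htdef, hwkw₀]
    _ < r / 2 + r / 2 := by linarith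
    _ = r := by ring
  have hFub := hball hub
  have hDnn : 0 ≤ (‖x k - u.1‖ ^ 2 + ‖z - u.2‖ ^ 2) / (2 * lam k) := by positivity
  linarith

/-- Reverse Fatou-type bound: if each set is measurable and frequent membership implies
membership in `B`, then `limsup` of the probabilities is at most the probability of `B`. -/
private lemma aux_limsup_measure {Ω : Type*} [MeasurableSpace Ω] (P : Measure Ω)
    [IsProbabilityMeasure P] (A : ℕ → Set Ω) (B : Set Ω) (hA : ∀ k, MeasurableSet (A k))
    (hsub : ∀ ω, (∃ᶠ k in atTop, ω ∈ A k) → ω ∈ B) :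
    limsup (fun k => (P (A k)).toReal) atTop ≤ (P B).toReal := by
  set U : ℕ → Set Ω := fun n => ⋃ k, ⋃ (_ : n ≤ k), A k with hU
  have hUm : ∀ n, MeasurableSet (U n) :=
    fun n => MeasurableSet.iUnion fun k => MeasurableSet.iUnion fun _ => hA k
  have hanti : Antitone U := by
    intro a b hab ω hω
    simp only [hU, Set.mem_iUnion] at hω ⊢
    obtain ⟨k, hk, hm⟩ := hω
    exact ⟨k, le_trans hab hk, hm⟩
  have hsub2 : (⋂ n, U n) ⊆ B := by
    intro ω hω
    apply hsub
    rw [frequently_atTop]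
    intro a
    have h1 := Set.mem_iInter.1 hω a
    simp only [hU, Set.mem_iUnion] at h1
    obtain ⟨k, hk, hm⟩ := h1
    exact ⟨k, hk, hm⟩
  have ht := tendsto_measure_iInter_atTop (μ := P)
    (fun n => (hUm n).nullMeasurableSet) hanti ⟨0, measure_ne_top P _⟩
  have ht2 : Tendsto (fun n => (P (U n)).toReal) atTop (𝓝 ((P (⋂ n, U n)).toReal)) :=
    (ENNReal.tendsto_toReal (measure_ne_top P _)).comp ht
  have key : ∀ n, limsup (fun k => (P (A k)).toReal) atTop ≤ (P (U n)).toReal := by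
    intro n
    apply limsup_le_of_le
    · exact isCoboundedUnder_le_of_le (atTop : Filter ℕ) (x := 0)
        fun k => ENNReal.toReal_nonneg
    · filter_upwards [eventually_ge_atTop n] with k hk
      refine ENNReal.toReal_mono (measure_ne_top P _) (measure_mono ?_)
      exact Set.subset_iUnion₂ (s := fun k _ => A k) k hk
  have hle : limsup (fun k => (P (A k)).toReal) atTop ≤ (P (⋂ n, U n)).toReal :=
    ge_of_tendsto ht2 (Eventually.of_forall key)
  exact hle.trans (ENNReal.toReal_mono (measure_ne_top P _) (measure_mono hsub2))

/-- Theorem 3.1(b), strong convergence case: for any `λ_k → 0⁺` and `x_k → x` strongly,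
`limsup_k φ_{λ_k}(x_k) ≤ φ(x)`. -/
theorem stmt5
    {H Y : Type*} [NormedAddCommGroup H] [InnerProductSpace ℝ H] [CompleteSpace H]
    [SecondCountableTopology H]
    [NormedAddCommGroup Y] [NormedSpace ℝ Y] [CompleteSpace Y] {m : ℕ}
    {Ω : Type*} [MeasurableSpace Ω] (P : Measure Ω) [IsProbabilityMeasure P]
    (ξ : Ω → EuclideanSpace ℝ (Fin m)) (hξ : Measurable ξ)
    (hlaw : P.map ξ ≪ volume)
    (K : Set Y) (hKne : K.Nonempty) (hKcl : IsClosed K) (hKconv : Convex ℝ K)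
    (hKcone : ∀ c : ℝ, 0 ≤ c → ∀ y ∈ K, c • y ∈ K)
    (C : Set (WeakDual ℝ Y)) (hCne : C.Nonempty) (hCconv : Convex ℝ C) (hCcpt : IsCompact C)
    (hCgen : closure {w : WeakDual ℝ Y | ∃ c : ℝ, 0 ≤ c ∧ ∃ v ∈ C, w = c • v}
      = {w : WeakDual ℝ Y | ∀ y ∈ K, 0 ≤ w y})
    (Φ : H → EuclideanSpace ℝ (Fin m) → Y)
    (hΦ : Continuous fun q : H × EuclideanSpace ℝ (Fin m) => Φ q.1 q.2)
    (h : H → ℝ) (hconv : ConvexOn ℝ Set.univ h) (hC1 : ContDiff ℝ 1 h)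
    (hscal : ∀ v ∈ C, ConvexOn ℝ Set.univ
      (fun q : H × EuclideanSpace ℝ (Fin m) => v (Φ q.1 q.2) + h q.1))
    (S : H → EuclideanSpace ℝ (Fin m) → ℝ)
    (hS : ∀ x z, S x z = ⨆ v : C, ((v : WeakDual ℝ Y) (Φ x z) + h x))
    (φ : H → ℝ)
    (hφ : ∀ x, φ x = (P {ω | S x (ξ ω) ≤ h x}).toReal)
    (φl : ℝ → H → ℝ)
    (hφl : ∀ lam x, φl lam x = (P {ω | moreauEnv2 S lam x (ξ ω) ≤ h x}).toReal)
    :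
    ∀ lam : ℕ → ℝ, (∀ k, 0 < lam k) → Tendsto lam atTop (𝓝 0) →
    ∀ (x : ℕ → H) (x₀ : H), Tendsto x atTop (𝓝 x₀) →
      Filter.limsup (fun k => φl (lam k) (x k)) atTop ≤ φ x₀ := by
  intro lam hpos hlam0 x x₀ hx
  have hh : Continuous h := hC1.continuous
  haveI : Nonempty ↥C := hCne.to_subtype
  -- boundedness of the scalarization family
  have hbddA : ∀ w : H × EuclideanSpace ℝ (Fin m),
      BddAbove (Set.range fun v : C => (v : WeakDual ℝ Y) (Φ w.1 w.2) + h w.1) := by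
    intro w
    have hc : Continuous fun v : WeakDual ℝ Y => v (Φ w.1 w.2) + h w.1 :=
      (WeakDual.eval_continuous _).add continuous_const
    have h2 := (hCcpt.image hc).bddAbove
    rwa [Set.image_eq_range] at h2
  have hFge : ∀ (w : H × EuclideanSpace ℝ (Fin m)) (v : C),
      (v : WeakDual ℝ Y) (Φ w.1 w.2) + h w.1 ≤ S w.1 w.2 := by
    intro w v
    rw [hS w.1 w.2]
    exact le_ciSup (hbddA w) v
  -- lower semicontinuity of the full function
  have hFlsc : LowerSemicontinuous fun w : H × EuclideanSpace ℝ (Fin m) => S w.1 w.2 := by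
    intro w₀ c hc
    have hc' : c < S w₀.1 w₀.2 := hc
    rw [hS w₀.1 w₀.2] at hc'
    obtain ⟨v, hv⟩ := exists_lt_of_lt_ciSup hc'
    have hgc : Continuous fun w : H × EuclideanSpace ℝ (Fin m) =>
        (v : WeakDual ℝ Y) (Φ w.1 w.2) + h w.1 :=
      ((map_continuous (v : WeakDual ℝ Y)).comp hΦ).add (hh.comp continuous_fst)
    have hev : ∀ᶠ w in 𝓝 w₀, c < (v : WeakDual ℝ Y) (Φ w.1 w.2) + h w.1 :=
      hgc.continuousAt.eventually (eventually_gt_nhds hv)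
    exact hev.mono fun w hw => lt_of_lt_of_le hw (hFge w v)
  -- convexity of the full function
  have hFconv : ConvexOn ℝ Set.univ fun w : H × EuclideanSpace ℝ (Fin m) => S w.1 w.2 := by
    refine ⟨convex_univ, fun p _ q _ a b ha hb hab => ?_⟩
    simp only
    rw [hS]
    refine ciSup_le fun v => ?_
    have h1 := (hscal v v.2).2 (Set.mem_univ p) (Set.mem_univ q) ha hb hab
    simp only [smul_eq_mul] at h1 ⊢
    have h2 := mul_le_mul_of_nonneg_left (hFge p v) ha
    have h3 := mul_le_mul_of_nonneg_left (hFge q v) hb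
    calc _ ≤ _ := h1
    _ ≤ a * S p.1 p.2 + b * S q.1 q.2 := add_le_add h2 h3
  -- linear minorant
  obtain ⟨A₀, B₀, hB₀, hmin⟩ :=
    aux_minorant hFconv ((x₀, (0 : EuclideanSpace ℝ (Fin m)))) (hFlsc _)
  -- measurability of Moreau sublevel sets
  have hms : ∀ (x' : H) (l : ℝ), 0 < l → ∀ c : ℝ,
      MeasurableSet {z : EuclideanSpace ℝ (Fin m) | moreauEnv2 S l x' z ≤ c} := by
    intro x' l hl c
    have hset : {z : EuclideanSpace ℝ (Fin m) | moreauEnv2 S l x' z ≤ c}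
        = ⋂ n : ℕ, {z | moreauEnv2 S l x' z < c + 1 / (n + 1)} := by
      ext z
      simp only [Set.mem_setOf_eq, Set.mem_iInter]
      constructor
      · intro hz n
        have hn : (0:ℝ) < 1 / ((n:ℝ) + 1) := by positivity
        linarith
      · intro hz
        by_contra hlt
        push_neg at hlt
        obtain ⟨n, hn⟩ :=
          exists_nat_one_div_lt (show (0:ℝ) < moreauEnv2 S l x' z - c by linarith)
        have := hz n
        linarith
    rw [hset]
    refine MeasurableSet.iInter fun n => ?_
    have heq : {z : EuclideanSpace ℝ (Fin m) | moreauEnv2 S l x' z < c + 1 / (n + 1)}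
        = ⋃ u : H × EuclideanSpace ℝ (Fin m),
          {z | S u.1 u.2 + (‖x' - u.1‖ ^ 2 + ‖z - u.2‖ ^ 2) / (2 * l) < c + 1 / (n + 1)} := by
      ext z
      simp only [Set.mem_setOf_eq, Set.mem_iUnion]
      constructor
      · intro hz
        exact exists_lt_of_ciInf_lt hz
      · rintro ⟨u, hu⟩
        refine lt_of_le_of_lt ?_ hu
        exact ciInf_le (aux_bdd hB₀ hmin (x', z) hl) u
    rw [heq]
    refine (isOpen_iUnion fun u => ?_).measurableSet
    have hcz : Continuous fun z : EuclideanSpace ℝ (Fin m) =>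
        S u.1 u.2 + (‖x' - u.1‖ ^ 2 + ‖z - u.2‖ ^ 2) / (2 * l) := by
      apply continuous_const.add
      apply Continuous.div_const
      exact continuous_const.add ((continuous_id.sub continuous_const).norm.pow 2)
    exact isOpen_lt hcz continuous_const
  -- assemble
  rw [hφ]
  have hrw : (fun k => φl (lam k) (x k))
      = fun k => (P {ω | moreauEnv2 S (lam k) (x k) (ξ ω) ≤ h (x k)}).toReal := by
    funext k; exact hφl (lam k) (x k)
  rw [hrw]
  refine aux_limsup_measure P
    (fun k => {ω | moreauEnv2 S (lam k) (x k) (ξ ω) ≤ h (x k)})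
    {ω | S x₀ (ξ ω) ≤ h x₀} (fun k => ?_) (fun ω hω => ?_)
  · exact hξ (hms (x k) (lam k) (hpos k) (h (x k)))
  · exact aux_pointwise hFlsc hB₀ hmin lam hpos hlam0 x x₀ hx (ξ ω)
      (fun k => h (x k)) (h x₀) ((hh.tendsto x₀).comp hx) hω
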